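/- arXiv:2502.18669 — 6 statements merged into one kernel-verified Lean document; each statement's English description precedes it below -/
import Mathlib

section
/- For every quaternion matrix A in Sp(1,1) with entries a, b, c, d (so that A^* I_{1,1} A = I_{1,1} where I_{1,1} = diag(1,-1)), and every quaternion q with |q| < 1, the element qc + d is nonzero, and the classical Möbius transformation F_A(q) = (qc+d)^{-1}(qa+b) satisfies |F_A(q)| < 1. -/
open Quaternion Matrix

private lemma aux_comm {M N : Matrix (Fin 2) (Fin 2) (Quaternion ℝ)}
    (h : M * N = 1) : N * M = 1 := by
  have h1 : N.vecMulLinear * M.vecMulLinear = 1 := by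
    refine LinearMap.ext fun v => ?_
    simp [Matrix.vecMul_vecMul, h]
  rw [mul_eq_one_comm] at h1
  refine Matrix.ext fun i j => ?_
  have h2 := congrFun (LinearMap.congr_fun h1 (Pi.single i 1)) j
  simpa [Matrix.mul_apply, Matrix.vecMul, dotProduct, Matrix.one_apply,
    Pi.single_apply, eq_comm] using h2

/-- For `A ∈ Sp(1,1)` and `|q| < 1`, the denominator `q c + d` of the classical
Möbius transformation is nonzero and `|F_A(q)| < 1`. -/
theorem stmt_0 (A : Matrix (Fin 2) (Fin 2) (Quaternion ℝ))
    (hA : Aᴴ * !![1, 0; 0, -1] * A = !![1, 0; 0, -1])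
    (q : Quaternion ℝ) (hq : ‖q‖ < 1) :
    q * A 0 1 + A 1 1 ≠ 0 ∧
      ‖(q * A 0 1 + A 1 1)⁻¹ * (q * A 0 0 + A 1 0)‖ < 1 := by
  have hI : (!![1, 0; 0, -1] : Matrix (Fin 2) (Fin 2) (Quaternion ℝ)) * !![1, 0; 0, -1] = 1 := by
    rw [Matrix.one_fin_two]; norm_num [Matrix.mul_fin_two]
  have hBA : (!![1, 0; 0, -1] * Aᴴ * !![1, 0; 0, -1]) * A = 1 := by
    rw [Matrix.mul_assoc, Matrix.mul_assoc, ← Matrix.mul_assoc Aᴴ, hA, hI]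
  have hAB := aux_comm hBA
  have E00 := congrFun (congrFun hAB 0) 0
  have E01 := congrFun (congrFun hAB 0) 1
  have E10 := congrFun (congrFun hAB 1) 0
  have E11 := congrFun (congrFun hAB 1) 1
  simp [Matrix.mul_apply, Matrix.vecMul, dotProduct, Fin.sum_univ_two,
    Matrix.conjTranspose_apply] at E00 E01 E10 E11
  set a := A 0 0
  set b := A 1 0
  set c := A 0 1
  set d := A 1 1
  have F1 : c * star c - a * star a = -1 := by rw [← E00]; noncomm_ring
  have F2 : c * star d - a * star b = 0 := by rw [← E01]; noncomm_ring
  have F3 : d * star c - b * star a = 0 := by rw [← neg_zero, ← E10]; noncomm_ring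
  have F4 : d * star d - b * star b = 1 := by rw [← E11]; noncomm_ring
  have expand : (q * c + d) * star (q * c + d) - (q * a + b) * star (q * a + b)
      = q * (c * star c - a * star a) * star q
        + q * (c * star d - a * star b)
        + (d * star c - b * star a) * star q
        + (d * star d - b * star b) := by
    simp only [star_add, StarMul.star_mul]
    noncomm_ring
  rw [F1, F2, F3, F4] at expand
  have key : (q * c + d) * star (q * c + d)
      = (q * a + b) * star (q * a + b) + (1 - q * star q) := by
    rw [sub_eq_iff_eq_add] at expand
    rw [expand]; noncomm_ring
  rw [Quaternion.self_mul_star, Quaternion.self_mul_star, Quaternion.self_mul_star] at key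
  have keyR : normSq (q * c + d) = normSq (q * a + b) + (1 - normSq q) :=
    Quaternion.coe_injective (by exact_mod_cast key)
  rw [Quaternion.normSq_eq_norm_mul_self, Quaternion.normSq_eq_norm_mul_self,
    Quaternion.normSq_eq_norm_mul_self] at keyR
  clear hA hI hBA hAB E00 E01 E10 E11 F1 F2 F3 F4 expand key
  generalize hu : ‖q * c + d‖ = x at *
  generalize hw : ‖q * a + b‖ = y at *
  generalize hqn : ‖q‖ = z at *
  have hx0 : 0 ≤ x := hu ▸ norm_nonneg _
  have hy0 : 0 ≤ y := hw ▸ norm_nonneg _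
  have hz0 : 0 ≤ z := hqn ▸ norm_nonneg _
  have hupos : 0 < x := by nlinarith
  refine ⟨norm_pos_iff.mp (hu ▸ hupos), ?_⟩
  have hwu : y < x := by nlinarith
  rw [norm_mul, norm_inv, hu, hw]
  calc x⁻¹ * y < x⁻¹ * x :=
        (mul_lt_mul_iff_right₀ (inv_pos.mpr hupos)).mpr hwu
    _ = 1 := inv_mul_cancel₀ (ne_of_gt hupos)
end

section
/- The only matrices A in Sp(1,1) for which F_A is the identity map of the quaternionic unit ball are A = I_2 and A = -I_2. -/
open Quaternion Matrix

/-- The only matrices of `Sp(1,1)` acting as the identity Möbius transformation on the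
quaternionic unit ball are `I₂` and `-I₂`. -/
theorem stmt_4 (A : Matrix (Fin 2) (Fin 2) (Quaternion ℝ))
    (hA : Aᴴ * !![1, 0; 0, -1] * A = !![1, 0; 0, -1]) :
    (∀ q : Quaternion ℝ, ‖q‖ < 1 →
        (q * A 0 1 + A 1 1)⁻¹ * (q * A 0 0 + A 1 0) = q) ↔
      A = 1 ∨ A = -1 := by
  constructor
  · intro h
    have e00 := congrFun (congrFun hA 0) 0
    have e01 := congrFun (congrFun hA 0) 1
    have e11 := congrFun (congrFun hA 1) 1
    simp [Matrix.mul_apply, Fin.sum_univ_two, Matrix.conjTranspose_apply] at e00 e01 e11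
    have hnre : normSq (A 0 1) - normSq (A 1 1) = -1 := by
      rw [star_mul_self, star_mul_self] at e11
      have := congrArg QuaternionAlgebra.re e11
      simpa [sub_eq_add_neg] using this
    have hd : A 1 1 ≠ 0 := by
      intro h0
      rw [h0] at hnre
      simp at hnre
      nlinarith [normSq_nonneg (a := A 0 1)]
    have hb : A 1 0 = 0 := by
      have h0 := h 0 (by norm_num)
      simp at h0
      rcases h0 with h1 | h1
      · exact absurd h1 hd
      · exact h1
    have ha : A 0 0 ≠ 0 := by
      intro h0
      rw [h0, hb] at e00
      simp at e00
    have hc : A 0 1 = 0 := by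
      rw [hb] at e01
      simp at e01
      rcases e01 with h1 | h1
      · exact absurd h1 ha
      · exact h1
    have hnd : normSq (A 1 1) = 1 := by
      rw [hc] at hnre; simp at hnre; linarith
    have hcomm : ∀ q : Quaternion ℝ, ‖q‖ < 1 → q * A 0 0 = A 1 1 * q := by
      intro q hq
      have := h q hq
      rw [hc, hb, mul_zero, zero_add, add_zero] at this
      rwa [inv_mul_eq_iff_eq_mul₀ hd] at this
    have had : A 0 0 = A 1 1 := by
      have hh := hcomm ((1/2 : ℝ) : ℍ) (by rw [Quaternion.norm_coe]; norm_num)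
      rw [← Quaternion.coe_commutes] at hh
      have h2 : ((1/2 : ℝ) : ℍ) ≠ 0 := by
        simpa using Quaternion.coe_injective.ne (show (1/2:ℝ) ≠ 0 by norm_num)
      exact mul_left_cancel₀ h2 hh
    have hsmall : ∀ x : Quaternion ℝ, normSq x = 1/4 → ‖x‖ < 1 := by
      intro x hx
      have h2 : ‖x‖ * ‖x‖ = 1/4 := by rw [← normSq_eq_norm_mul_self]; exact hx
      nlinarith [norm_nonneg x]
    obtain ⟨d, hAd⟩ : ∃ d, A 1 1 = d := ⟨_, rfl⟩
    rw [hAd] at hcomm had hnd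
    obtain ⟨qi, hqi_def⟩ : ∃ q : ℍ, q = ⟨0, 1/2, 0, 0⟩ := ⟨_, rfl⟩
    obtain ⟨qj, hqj_def⟩ : ∃ q : ℍ, q = ⟨0, 0, 1/2, 0⟩ := ⟨_, rfl⟩
    have hqi := hcomm qi (hsmall _ (by rw [normSq_def', hqi_def]; norm_num))
    have hqj := hcomm qj (hsmall _ (by rw [normSq_def', hqj_def]; norm_num))
    rw [had] at hqi hqj
    rw [Quaternion.ext_iff] at hqi hqj
    simp only [Quaternion.imJ_mul, Quaternion.imK_mul, Quaternion.re_mul,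
      Quaternion.imI_mul] at hqi hqj
    subst hqi_def hqj_def
    simp only at hqi hqj
    obtain ⟨h1, h2, h3, h4⟩ := hqi
    obtain ⟨g1, g2, g3, g4⟩ := hqj
    have hJ : d.imJ = 0 := by linarith only [h4]
    have hK : d.imK = 0 := by linarith only [h3]
    have hI : d.imI = 0 := by linarith only [g4]
    rw [normSq_def'] at hnd
    have hsq : d.re * d.re = 1 := by
      rw [hI, hJ, hK] at hnd
      linear_combination hnd
    have hre : d.re = 1 ∨ d.re = -1 := mul_self_eq_one_iff.mp hsq
    have hdval : d = 1 ∨ d = -1 := by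
      rcases hre with h1 | h1
      · left; ext <;> simp [h1, hI, hJ, hK]
      · right; ext <;> simp [h1, hI, hJ, hK]
    rcases hdval with hv | hv
    · left; refine Matrix.ext fun i j => ?_; fin_cases i <;> fin_cases j <;>
        simp [Matrix.one_apply, had, hb, hc, hAd, hv]
    · right; refine Matrix.ext fun i j => ?_; fin_cases i <;> fin_cases j <;>
        simp [Matrix.one_apply, had, hb, hc, hAd, hv]
  · rintro (rfl | rfl) q hq <;> simp [Matrix.one_apply, inv_neg]
end

section
/- A classical Möbius transformation of the quaternionic unit ball of the form F(q) = v·(1 - q·conj(a))^{-1}·(q - a)·u, with a in B and u, v unit quaternions, is slice regular if and only if a is real (a in (-1,1)) and v in {1, -1}. Consequently, the classical Möbius transformations that are slice regular are exactly the maps q ↦ (1 - qa)^{-1}(q - a)u with a in (-1,1) and u a unit quaternion. -/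
open Quaternion Matrix

/-- A function on the quaternionic unit ball is slice regular iff it admits a power series
expansion `∑ qⁿ aₙ` with right quaternionic coefficients converging on the ball. -/
def SliceRegularOnBall (f : Quaternion ℝ → Quaternion ℝ) : Prop :=
  ∃ c : ℕ → Quaternion ℝ, ∀ q : Quaternion ℝ, ‖q‖ < 1 →
    HasSum (fun n : ℕ => q ^ n * c n) (f q)

/-- The coefficients of the power series expansion of a classical Möbius transformation. -/
noncomputable def mobCoeff (a u v : ℍ[ℝ]) : ℕ → ℍ[ℝ]
  | 0 => -(v * a * u)
  | n + 1 => (1 - normSq a) • (v * (star a) ^ n * u)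

lemma one_sub_ne_zero_of_norm_lt_one {x : ℍ[ℝ]} (h : ‖x‖ < 1) : (1 : ℍ[ℝ]) - x ≠ 0 := by
  intro h0
  rw [← sub_eq_zero.mp h0] at h
  simp at h

set_option maxHeartbeats 1000000 in
lemma mob_hasSum {a u v : ℍ[ℝ]} (q : ℍ[ℝ]) (ha : ‖a‖ < 1) (hq : ‖q‖ < 1)
    (hqa : q * star a = star a * q) (hqv : q * v = v * q) :
    HasSum (fun n => q ^ n * mobCoeff a u v n)
      (v * (1 - q * star a)⁻¹ * (q - a) * u) := by
  set b := star a with hb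
  have hnb : ‖q * b‖ < 1 := by
    have h1 : ‖q * b‖ ≤ ‖q‖ * ‖b‖ := norm_mul_le _ _
    have h2 : ‖b‖ = ‖a‖ := Quaternion.norm_star a
    nlinarith [norm_nonneg q, norm_nonneg b]
  set w := (1 : ℍ[ℝ]) - q * b with hw
  have hw0 : w ≠ 0 := one_sub_ne_zero_of_norm_lt_one hnb
  have hcw : q * w = w * q := by
    have h3 : q * (q * b) = (q * b) * q := by
      rw [mul_assoc, hqa, ← mul_assoc]
    simp only [hw, mul_sub, sub_mul, mul_one, one_mul, h3]
  have hcwi : q * w⁻¹ = w⁻¹ * q := (Commute.inv_right₀ hcw).eq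
  have G : HasSum (fun n : ℕ => (q * b) ^ n) w⁻¹ := hasSum_geometric_of_norm_lt_one hnb
  have G2 := ((G.mul_left (v * q)).mul_right u).const_smul (1 - normSq a)
  have hpt : (fun n : ℕ => (1 - normSq a) • (v * q * (q * b) ^ n * u))
      = fun n : ℕ => q ^ (n + 1) * mobCoeff a u v (n + 1) := by
    funext n
    simp only [mobCoeff]
    rw [mul_smul_comm]
    congr 1
    have h1 : (q * b) ^ n = q ^ n * b ^ n := Commute.mul_pow hqa n
    have h2 : q ^ (n+1) * v = v * q ^ (n+1) := ((Commute.pow_left hqv (n+1))).eq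
    rw [h1]
    calc v * q * (q ^ n * b ^ n) * u = v * (q * q ^ n) * (b ^ n * u) := by
          simp only [mul_assoc]
      _ = v * q ^ (n+1) * (b ^ n * u) := by rw [← pow_succ']
      _ = q ^ (n+1) * v * (b ^ n * u) := by rw [← h2]
      _ = q ^ (n+1) * (v * b ^ n * u) := by simp only [mul_assoc]
  rw [hpt] at G2
  have G4 := (hasSum_nat_add_iff (f := fun n => q ^ n * mobCoeff a u v n) 1).mp G2
  have hsum0 : ∑ i ∈ Finset.range 1, q ^ i * mobCoeff a u v i = -(v * a * u) := by
    simp [mobCoeff]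
  rw [hsum0] at G4
  convert G4 using 1
  · rfl
  have key : w⁻¹ * (q - a) = (1 - normSq a) • (w⁻¹ * q) - a := by
    apply mul_left_cancel₀ hw0
    have h1 : w * (w⁻¹ * (q - a)) = q - a := by
      rw [← mul_assoc, mul_inv_cancel₀ hw0, one_mul]
    have h2 : w * ((1 - normSq a) • (w⁻¹ * q) - a) = (1 - normSq a) • q - w * a := by
      rw [mul_sub, mul_smul_comm, ← mul_assoc, mul_inv_cancel₀ hw0, one_mul]
    rw [h1, h2]
    have h3 : w * a = a - normSq a • q := by
      rw [hw, sub_mul, one_mul, mul_assoc, hb, Quaternion.star_mul_self,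
        Quaternion.mul_coe_eq_smul]
    rw [h3, sub_smul, one_smul]
    abel
  have h4 : v * q * w⁻¹ * u = v * (w⁻¹ * q) * u := by
    rw [mul_assoc v q, hcwi, ← mul_assoc]
  have h5 : v * w⁻¹ * (q - a) * u = v * (w⁻¹ * (q - a)) * u := by
    rw [mul_assoc v]
  rw [h4, h5, key, mul_sub, sub_mul, mul_smul_comm, smul_mul_assoc]
  abel

set_option maxHeartbeats 1000000 in
lemma coeff_unique {f : ℍ[ℝ] → ℍ[ℝ]} {c d : ℕ → ℍ[ℝ]}
    (hc : ∀ x : ℝ, |x| < 1 → HasSum (fun n => ((x : ℍ[ℝ])) ^ n * c n) (f x))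
    (hd : ∀ x : ℝ, |x| < 1 → HasSum (fun n => ((x : ℍ[ℝ])) ^ n * d n) (f x)) : c = d := by
  have key : ∀ e : ℕ → ℍ[ℝ], (∀ x : ℝ, |x| < 1 → HasSum (fun n => ((x : ℍ[ℝ])) ^ n * e n) (f x)) →
      HasFPowerSeriesAt (fun x : ℝ => f x)
        (fun n => ContinuousMultilinearMap.mkPiRing ℝ (Fin n) (e n)) 0 := by
    intro e he
    have hsm : ∀ (x : ℝ) (n : ℕ), ((x : ℍ[ℝ])) ^ n * e n = x ^ n • e n := by
      intro x n
      rw [← Quaternion.coe_pow, Quaternion.coe_mul_eq_smul]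
    obtain ⟨C, hC⟩ : ∃ C : ℝ, ∀ n : ℕ, ‖e n‖ * (2⁻¹ : ℝ) ^ n ≤ C := by
      have hs := (he 2⁻¹ (by rw [abs_of_pos] <;> norm_num)).summable
      have h0 : Filter.Tendsto (fun n => ‖(((2⁻¹ : ℝ) : ℍ[ℝ])) ^ n * e n‖)
          Filter.atTop (nhds 0) := by
        simpa using hs.tendsto_atTop_zero.norm
      obtain ⟨C, hC⟩ := h0.bddAbove_range
      refine ⟨C, fun n => ?_⟩
      have := hC (Set.mem_range_self n)
      rw [norm_mul, norm_pow, Quaternion.norm_coe] at this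
      calc ‖e n‖ * (2⁻¹:ℝ) ^ n = ‖(2⁻¹:ℝ)‖ ^ n * ‖e n‖ := by
            rw [Real.norm_eq_abs, abs_of_pos (by norm_num : (0:ℝ) < 2⁻¹)]; ring
        _ ≤ C := this
    refine ⟨2⁻¹, ?_, ?_, ?_⟩
    · have hle := FormalMultilinearSeries.le_radius_of_bound
        (p := fun n => ContinuousMultilinearMap.mkPiRing ℝ (Fin n) (e n)) C (r := (2⁻¹ : NNReal))
        (fun n => by
          rw [ContinuousMultilinearMap.norm_mkPiRing]
          simpa using hC n)
      simpa using hle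
    · norm_num
    · intro y hy
      have hy' : |y| < 1 := by
        rw [EMetric.mem_ball, edist_zero_right] at hy
        have : (‖y‖₊ : ENNReal) < (2⁻¹ : NNReal) := by
          convert hy
          · rfl
          simp
        rw [ENNReal.coe_lt_coe] at this
        have h2 : ‖y‖ < 2⁻¹ := this
        rw [Real.norm_eq_abs] at h2
        linarith
      have := he y hy'
      simp only [hsm] at this
      simpa [ContinuousMultilinearMap.mkPiRing_apply] using this
  have heq := (key c hc).eq_formalMultilinearSeries (key d hd)
  funext n
  have h1 := congrFun heq n
  have h2 := congrArg (fun m => m (fun _ : Fin n => (1:ℝ))) h1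
  simpa [ContinuousMultilinearMap.mkPiRing_apply] using h2

set_option maxHeartbeats 400000 in
lemma central_real {z : ℍ[ℝ]} (h : ∀ x : ℍ[ℝ], x * z = z * x) : ∃ r : ℝ, z = (r : ℍ[ℝ]) := by
  refine ⟨z.re, ?_⟩
  obtain ⟨i, hi⟩ : ∃ i : ℍ[ℝ], i = ⟨0,1,0,0⟩ := ⟨_, rfl⟩
  obtain ⟨j, hj⟩ : ∃ j : ℍ[ℝ], j = ⟨0,0,1,0⟩ := ⟨_, rfl⟩
  have h1 := h i
  have h2 := h j
  rw [Quaternion.ext_iff] at h1 h2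
  simp only [Quaternion.re_mul, Quaternion.imI_mul, Quaternion.imJ_mul, Quaternion.imK_mul] at h1 h2
  subst hi hj
  rw [Quaternion.ext_iff]
  simp only [Quaternion.re_coe, Quaternion.imI_coe, Quaternion.imJ_coe, Quaternion.imK_coe]
  norm_num at h1 h2 ⊢
  obtain ⟨e1, e2⟩ := h1
  obtain ⟨f1, f2⟩ := h2
  refine ⟨by linarith, by linarith, by linarith⟩

set_option maxHeartbeats 1000000 in
lemma key_identity {a u v : ℍ[ℝ]} (ha : ‖a‖ < 1) (hu0 : u ≠ 0) (hv0 : v ≠ 0)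
    (hK0 : (1 : ℝ) - normSq a ≠ 0)
    (hc : ∀ q : ℍ[ℝ], ‖q‖ < 1 → HasSum (fun n : ℕ => q ^ n * mobCoeff a u v n)
      (v * (1 - q * star a)⁻¹ * (q - a) * u))
    {q : ℍ[ℝ]} (hq : ‖q‖ < 1) :
    q * (1 - q * star a) = (1 - q * star a) * (v⁻¹ * q * v) := by
  set b := star a with hb
  have hnb : ‖q * b‖ < 1 := by
    have h1 : ‖q * b‖ ≤ ‖q‖ * ‖b‖ := norm_mul_le _ _
    have h2 : ‖b‖ = ‖a‖ := Quaternion.norm_star a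
    nlinarith [norm_nonneg q, norm_nonneg b]
  set w := (1 : ℍ[ℝ]) - q * b with hw
  have hw0 : w ≠ 0 := one_sub_ne_zero_of_norm_lt_one hnb
  set T := v * w⁻¹ * (q - a) * u with hT
  set K := (1 : ℝ) - normSq a with hK
  have hT0 := hc q hq
  have hs0 : ∑ i ∈ Finset.range 1, q ^ i * mobCoeff a u v i = -(v * a * u) := by
    simp [mobCoeff]
  have h1 : HasSum (fun n : ℕ => q ^ (n + 1) * mobCoeff a u v (n + 1)) (T + v * a * u) := by
    refine (hasSum_nat_add_iff (f := fun n => q ^ n * mobCoeff a u v n) 1).mpr ?_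
    rw [hs0]
    convert hT0 using 1
    · rfl
    abel
  have hs1 : ∑ i ∈ Finset.range 1, q ^ (i + 1) * mobCoeff a u v (i + 1)
      = q * (K • (v * u)) := by
    simp [mobCoeff, hK]
  have h2 : HasSum (fun n : ℕ => q ^ (n + 2) * mobCoeff a u v (n + 2))
      (T + v * a * u - q * (K • (v * u))) := by
    refine (hasSum_nat_add_iff (f := fun n => q ^ (n + 1) * mobCoeff a u v (n + 1)) 1).mpr ?_
    rw [hs1]
    convert h1 using 1
    · rfl
    abel
  have huu : u * (u⁻¹ * (b * u)) = b * u := by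
    rw [← mul_assoc, mul_inv_cancel₀ hu0, one_mul]
  have h3 := (h1.mul_left q).mul_right (u⁻¹ * (b * u))
  have hpt : (fun n : ℕ => q * (q ^ (n + 1) * mobCoeff a u v (n + 1)) * (u⁻¹ * (b * u)))
      = fun n : ℕ => q ^ (n + 2) * mobCoeff a u v (n + 2) := by
    funext n
    simp only [mobCoeff]
    simp only [mul_smul_comm, smul_mul_assoc]
    congr 1
    calc q * (q ^ (n + 1) * (v * b ^ n * u)) * (u⁻¹ * (b * u))
        = (q * q ^ (n + 1)) * (v * (b ^ n * (u * (u⁻¹ * (b * u))))) := by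
          simp only [mul_assoc]
      _ = q ^ (n + 2) * (v * (b ^ n * (b * u))) := by rw [huu, ← pow_succ']
      _ = q ^ (n + 2) * (v * b ^ (n + 1) * u) := by
          simp only [pow_succ, mul_assoc]
  rw [hpt] at h3
  have EQ1 : T + v * a * u - q * (K • (v * u)) = q * (T + v * a * u) * (u⁻¹ * (b * u)) :=
    h2.unique h3
  have hTm : T + v * a * u = K • (v * (w⁻¹ * q) * u) := by
    have key : w⁻¹ * (q - a) + a = K • (w⁻¹ * q) := by
      apply mul_left_cancel₀ hw0
      have e1 : w * (w⁻¹ * (q - a) + a) = (q - a) + w * a := by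
        rw [mul_add, ← mul_assoc, mul_inv_cancel₀ hw0, one_mul]
      have e2 : w * (K • (w⁻¹ * q)) = K • q := by
        rw [mul_smul_comm, ← mul_assoc, mul_inv_cancel₀ hw0, one_mul]
      rw [e1, e2]
      have e3 : w * a = a - normSq a • q := by
        rw [hw, sub_mul, one_mul, mul_assoc, hb, Quaternion.star_mul_self,
          Quaternion.mul_coe_eq_smul]
      rw [e3, hK, sub_smul, one_smul]
      abel
    calc T + v * a * u = v * (w⁻¹ * (q - a) + a) * u := by
          rw [hT, mul_add, add_mul, mul_assoc v w⁻¹]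
      _ = K • (v * (w⁻¹ * q) * u) := by rw [key, mul_smul_comm, smul_mul_assoc]
  rw [hTm] at EQ1
  have EQ2 : K • (v * (w⁻¹ * q) * u - q * (v * u))
      = K • (q * (v * (w⁻¹ * (q * b))) * u) := by
    calc K • (v * (w⁻¹ * q) * u - q * (v * u))
        = K • (v * (w⁻¹ * q) * u) - q * (K • (v * u)) := by
          rw [smul_sub, mul_smul_comm]
      _ = q * (K • (v * (w⁻¹ * q) * u)) * (u⁻¹ * (b * u)) := EQ1
      _ = K • (q * (v * (w⁻¹ * (q * b))) * u) := by
          rw [mul_smul_comm, smul_mul_assoc]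
          congr 1
          calc q * (v * (w⁻¹ * q) * u) * (u⁻¹ * (b * u))
              = q * (v * (w⁻¹ * (q * (u * (u⁻¹ * (b * u)))))) := by simp only [mul_assoc]
            _ = q * (v * (w⁻¹ * (q * (b * u)))) := by rw [huu]
            _ = q * (v * (w⁻¹ * (q * b))) * u := by simp only [mul_assoc]
  have EQ3 : v * (w⁻¹ * q) * u - q * (v * u) = q * (v * (w⁻¹ * (q * b))) * u :=
    smul_right_injective _ hK0 EQ2
  have EQ4 : v * (w⁻¹ * q) - q * v = q * (v * (w⁻¹ * (q * b))) := by
    apply mul_right_cancel₀ hu0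
    rw [sub_mul]
    calc v * (w⁻¹ * q) * u - q * v * u = v * (w⁻¹ * q) * u - q * (v * u) := by
          rw [mul_assoc q v]
      _ = q * (v * (w⁻¹ * (q * b))) * u := EQ3
  have hqb : q * b = 1 - w := by rw [hw]; abel
  have EQ5 : v * (w⁻¹ * q) = q * (v * w⁻¹) := by
    have e : w⁻¹ * (q * b) = w⁻¹ - 1 := by
      rw [hqb, mul_sub, mul_one, inv_mul_cancel₀ hw0]
    rw [e, mul_sub, mul_one, mul_sub] at EQ4
    linear_combination (norm := abel) EQ4
  have e6 : w⁻¹ * q = v⁻¹ * (q * (v * w⁻¹)) := by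
    rw [← EQ5, ← mul_assoc, inv_mul_cancel₀ hv0, one_mul]
  calc q * w = (w * (w⁻¹ * q)) * w := by
        rw [← mul_assoc, mul_inv_cancel₀ hw0, one_mul]
    _ = (w * (v⁻¹ * (q * (v * w⁻¹)))) * w := by rw [e6]
    _ = w * (v⁻¹ * (q * (v * (w⁻¹ * w)))) := by simp only [mul_assoc]
    _ = w * (v⁻¹ * q * v) := by rw [inv_mul_cancel₀ hw0, mul_one, mul_assoc]

set_option maxHeartbeats 1000000 in
lemma identity_consequence {b v : ℍ[ℝ]} (hv0 : v ≠ 0)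
    (hid : ∀ q : ℍ[ℝ], ‖q‖ < 1 → q * (1 - q * b) = (1 - q * b) * (v⁻¹ * q * v)) :
    (∀ x : ℍ[ℝ], x * v = v * x) ∧ (∀ x : ℍ[ℝ], x * b = b * x) := by
  have main : ∀ x : ℍ[ℝ], x - v⁻¹ * x * v = 0 ∧
      x * (x * b) - (x * b) * (v⁻¹ * x * v) = 0 := by
    intro x
    set t : ℝ := (2 * (‖x‖ + 1))⁻¹ with htdef
    have hx1 : (0:ℝ) < ‖x‖ + 1 := by positivity
    have ht : 0 < t := by positivity
    have hnorm : ∀ s : ℝ, 0 < s → s ≤ t → ‖s • x‖ < 1 := by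
      intro s hs hst
      rw [norm_smul, Real.norm_eq_abs, abs_of_pos hs]
      have h2 : t * ‖x‖ < 1 := by
        rw [htdef]
        rw [inv_mul_lt_iff₀ (by positivity)]
        nlinarith [norm_nonneg x]
      nlinarith [norm_nonneg x]
    have expand : ∀ s : ℝ, 0 < s → s ≤ t →
        s • (x - v⁻¹ * x * v) = (s * s) • (x * (x * b) - (x * b) * (v⁻¹ * x * v)) := by
      intro s hs hst
      have H := hid (s • x) (hnorm s hs hst)
      simp only [mul_sub, sub_mul, mul_one, one_mul, smul_mul_assoc, mul_smul_comm,
        smul_sub, smul_smul] at H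
      rw [smul_sub, smul_sub]
      linear_combination (norm := abel) H
    have e1 := expand t ht le_rfl
    have e2 := expand (t/2) (by positivity) (by linarith)
    set P := x - v⁻¹ * x * v
    set Q := x * (x * b) - (x * b) * (v⁻¹ * x * v)
    have p1 : P = t • Q := by
      apply smul_right_injective _ (ne_of_gt ht)
      show t • P = t • (t • Q)
      rw [smul_smul]; exact e1
    have p2 : P = (t/2) • Q := by
      apply smul_right_injective _ (ne_of_gt (by positivity : (0:ℝ) < t/2))
      show (t/2) • P = (t/2) • ((t/2) • Q)
      rw [smul_smul]; exact e2
    have hQ : Q = 0 := by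
      have : (t - t/2) • Q = 0 := by rw [sub_smul, ← p1, ← p2, sub_self]
      rcases smul_eq_zero.mp this with h | h
      · exfalso; apply absurd h; intro hh; nlinarith
      · exact h
    constructor
    · rw [p1, hQ, smul_zero]
    · exact hQ
  have hvc : ∀ x : ℍ[ℝ], x * v = v * x := by
    intro x
    have h := sub_eq_zero.mp (main x).1
    calc x * v = (v * (v⁻¹ * x)) * v := by rw [← mul_assoc, mul_inv_cancel₀ hv0, one_mul]
      _ = v * (v⁻¹ * x * v) := by simp only [mul_assoc]
      _ = v * x := by rw [← h]
  refine ⟨hvc, ?_⟩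
  intro x
  have h := sub_eq_zero.mp (main x).2
  have hconj : v⁻¹ * x * v = x := (sub_eq_zero.mp (main x).1).symm
  rw [hconj] at h
  rcases eq_or_ne x 0 with rfl | hx0
  · simp
  · calc x * b = x⁻¹ * (x * (x * b)) := by
          rw [← mul_assoc, ← mul_assoc, inv_mul_cancel₀ hx0, one_mul]
      _ = x⁻¹ * ((x * b) * x) := by rw [h]
      _ = x⁻¹ * (x * (b * x)) := by simp only [mul_assoc]
      _ = b * x := by rw [← mul_assoc, inv_mul_cancel₀ hx0, one_mul]

/-- A classical Möbius transformation `q ↦ v (1 - q conj a)⁻¹ (q - a) u` of the quaternionic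
unit ball is slice regular if and only if `a` is real and `v = ±1`. -/
theorem stmt_10 (a u v : Quaternion ℝ) (ha : ‖a‖ < 1) (hu : ‖u‖ = 1) (hv : ‖v‖ = 1) :
    SliceRegularOnBall (fun q => v * (1 - q * star a)⁻¹ * (q - a) * u) ↔
      (∃ r : ℝ, a = (r : Quaternion ℝ)) ∧ (v = 1 ∨ v = -1) := by
  have hu0 : u ≠ 0 := by intro h; rw [h] at hu; simp at hu
  have hv0 : v ≠ 0 := by intro h; rw [h] at hv; simp at hv
  constructor
  · rintro ⟨c, hc⟩
    have hK0 : (1:ℝ) - normSq a ≠ 0 := by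
      have h := Quaternion.normSq_eq_norm_mul_self a
      nlinarith [norm_nonneg a]
    have hcoeff : c = mobCoeff a u v := by
      apply coeff_unique (f := fun q : ℍ[ℝ] => v * (1 - q * star a)⁻¹ * (q - a) * u)
      · intro x hx
        exact hc _ (by rw [Quaternion.norm_coe]; exact hx)
      · intro x hx
        exact mob_hasSum _ ha (by rw [Quaternion.norm_coe]; exact hx)
          (Quaternion.coe_commutes x (star a)) (Quaternion.coe_commutes x v)
    rw [hcoeff] at hc
    have hid : ∀ q : ℍ[ℝ], ‖q‖ < 1 →
        q * (1 - q * star a) = (1 - q * star a) * (v⁻¹ * q * v) :=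
      fun q hq => key_identity ha hu0 hv0 hK0 hc hq
    obtain ⟨hvc, hbc⟩ := identity_consequence hv0 hid
    constructor
    · obtain ⟨r, hr⟩ := central_real hbc
      refine ⟨r, ?_⟩
      have h := congrArg star hr
      rw [star_star, Quaternion.star_coe] at h
      exact h
    · obtain ⟨s, hs⟩ := central_real hvc
      rw [hs, Quaternion.norm_coe, Real.norm_eq_abs] at hv
      rcases (abs_eq (by norm_num : (0:ℝ) ≤ 1)).mp hv with h | h
      · left; rw [hs, h]; norm_num
      · right; rw [hs, h]; push_cast; ring
  · rintro ⟨⟨r, rfl⟩, hv1⟩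
    refine ⟨mobCoeff (↑r) u v, fun q hq => ?_⟩
    have hqa : q * star ((r : ℝ) : ℍ[ℝ]) = star ((r : ℝ) : ℍ[ℝ]) * q := by
      rw [Quaternion.star_coe]
      exact (Quaternion.coe_commutes r q).symm
    have hqv : q * v = v * q := by
      rcases hv1 with rfl | rfl
      · rw [one_mul, mul_one]
      · simp only [mul_neg, neg_mul, one_mul, mul_one]
    exact mob_hasSum q ha hq hqa hqv
end

section
/- The centralizer of the subgroup Sp(1) × {1} = {diag(u,1) : u in Sp(1)} in Sp(1,1) equals {diag(ε, u) : ε in {1,-1}, u in Sp(1)}. -/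
open Quaternion Matrix

noncomputable def qi' : Quaternion ℝ := ⟨0,1,0,0⟩
noncomputable def qj' : Quaternion ℝ := ⟨0,0,1,0⟩

set_option maxHeartbeats 1000000 in
/-- The centralizer of `Sp(1) × {1} = {diag(u,1)}` in `Sp(1,1)` is
`{diag(ε, u) : ε = ±1, u ∈ Sp(1)}`. -/
theorem stmt_11 (A : Matrix (Fin 2) (Fin 2) (Quaternion ℝ))
    (hA : Aᴴ * !![1, 0; 0, -1] * A = !![1, 0; 0, -1]) :
    (∀ u : Quaternion ℝ, ‖u‖ = 1 → A * !![u, 0; 0, 1] = !![u, 0; 0, 1] * A) ↔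
      ∃ ε u : Quaternion ℝ, (ε = 1 ∨ ε = -1) ∧ ‖u‖ = 1 ∧ A = !![ε, 0; 0, u] := by
  constructor
  · intro h
    have hm1 : ‖(-1 : Quaternion ℝ)‖ = 1 := by simp
    have hqi : ‖qi'‖ = 1 := by
      have h1 : normSq qi' = 1 := by rw [Quaternion.normSq_def']; simp [qi']
      have h2 := Quaternion.normSq_eq_norm_mul_self qi'
      nlinarith [norm_nonneg qi']
    have hqj : ‖qj'‖ = 1 := by
      have h1 : normSq qj' = 1 := by rw [Quaternion.normSq_def']; simp [qj']
      have h2 := Quaternion.normSq_eq_norm_mul_self qj'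
      nlinarith [norm_nonneg qj']
    have e1 := h (-1) hm1
    have ei := h qi' hqi
    have ej := h qj' hqj
    have hb : A 0 1 = 0 := by
      have h2 := congrFun (congrFun e1 0) 1
      simp [Matrix.mul_apply, Fin.sum_univ_two] at h2
      have h3 : (2:ℝ) • A 0 1 = 0 := by
        rw [two_smul]; linear_combination (norm := module) h2
      simpa using (smul_eq_zero.mp h3).resolve_left (by norm_num)
    have hc : A 1 0 = 0 := by
      have h2 := congrFun (congrFun e1 1) 0
      simp [Matrix.mul_apply, Fin.sum_univ_two] at h2
      have h3 : (2:ℝ) • A 1 0 = 0 := by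
        rw [two_smul]; linear_combination (norm := module) h2.symm
      simpa using (smul_eq_zero.mp h3).resolve_left (by norm_num)
    set a := A 0 0 with ha
    have hi2 : a * qi' = qi' * a := by
      have h2 := congrFun (congrFun ei 0) 0
      simpa [Matrix.mul_apply, Fin.sum_univ_two] using h2
    have hj2 : a * qj' = qj' * a := by
      have h2 := congrFun (congrFun ej 0) 0
      simpa [Matrix.mul_apply, Fin.sum_univ_two] using h2
    -- from hA: star a * a = 1
    have hsa : star a * a = 1 := by
      have h2 := congrFun (congrFun hA 0) 0
      simpa [Matrix.mul_apply, Fin.sum_univ_two, Matrix.conjTranspose_apply, hc]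
        using h2
    -- a = ±1
    have h2 := congrArg (fun x : Quaternion ℝ => x.imJ) hi2
    have h3 := congrArg (fun x : Quaternion ℝ => x.imK) hi2
    have h4 := congrArg (fun x : Quaternion ℝ => x.imK) hj2
    simp only [Quaternion.imJ_mul, Quaternion.imK_mul] at h2 h3 h4
    simp [qi', qj', Quaternion.imJ_mul, Quaternion.imK_mul] at h2 h3 h4
    have h5 := congrArg (fun x : Quaternion ℝ => x.re) hsa
    simp [Quaternion.re_mul] at h5
    have h6 : a.re = 1 ∨ a.re = -1 :=
      mul_self_eq_one_iff.mp (by nlinarith)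
    have haε : a = 1 ∨ a = -1 := by
      rcases h6 with h | h
      · left; refine Quaternion.ext _ _ ?_ ?_ ?_ ?_ <;>
          simp only [Quaternion.re_one, Quaternion.imI_one, Quaternion.imJ_one,
            Quaternion.imK_one] <;> linarith
      · right; refine Quaternion.ext _ _ ?_ ?_ ?_ ?_ <;>
          simp only [Quaternion.re_neg, Quaternion.imI_neg, Quaternion.imJ_neg,
            Quaternion.imK_neg, Quaternion.re_one, Quaternion.imI_one, Quaternion.imJ_one,
            Quaternion.imK_one] <;> linarith
    -- |d| = 1
    have hd : ‖A 1 1‖ = 1 := by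
      have h7 := congrFun (congrFun hA 1) 1
      simp [Matrix.mul_apply, Fin.sum_univ_two, Matrix.conjTranspose_apply, hb] at h7
      have h8 : star (A 1 1) * A 1 1 = 1 := h7
      have h9 : normSq (A 1 1) = 1 := by
        rw [Quaternion.star_mul_self] at h8
        exact Quaternion.coe_injective (h8.trans (Quaternion.coe_one).symm)
      have h10 := Quaternion.normSq_eq_norm_mul_self (A 1 1)
      nlinarith [norm_nonneg (A 1 1)]
    refine ⟨a, A 1 1, haε, hd, ?_⟩
    rw [ha]
    clear_value a
    clear e1 ei ej hi2 hj2 hsa h2 h3 h4 h5 h6 haε hd hA h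
    conv_lhs => rw [Matrix.eta_fin_two A]
    rw [hb, hc]
  · rintro ⟨ε, u, hε, hu, rfl⟩ v hv
    rcases hε with rfl | rfl <;>
    · rw [Matrix.mul_fin_two, Matrix.mul_fin_two]
      congr 1 <;> simp
end

section
/- For every quaternion q, the matrix exponential of [[0, conj(q)],[q, 0]] equals (1 - tanh(|q|)^2)^{-1/2}·[[1, tanh(|q|)·conj(sgn(q))],[tanh(|q|)·sgn(q), 1]], where sgn(q) = q/|q| for q ≠ 0 and sgn(0) = 0. Consequently, the image of the set m_B = {[[0, conj(q)],[q, 0]] : q in H} under the matrix exponential is exactly the set of matrices M(a) = (1-|a|^2)^{-1/2}·[[1, conj(a)],[a, 1]] with a in B, and exp restricted to m_B is injective. -/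
open Quaternion Matrix
open scoped Classical

/-- The sign of a quaternion: `q/|q|` for `q ≠ 0` and `0` for `q = 0`. -/

noncomputable def qsgn (q : Quaternion ℝ) : Quaternion ℝ :=
  if q = 0 then 0 else (‖q‖⁻¹ : ℝ) • q

lemma qsgn_zero' : qsgn 0 = 0 := if_pos rfl

lemma norm_qsgn {q : Quaternion ℝ} (hq : q ≠ 0) : ‖qsgn q‖ = 1 := by
  rw [qsgn, if_neg hq, norm_smul, Real.norm_eq_abs, abs_of_nonneg (by positivity),
    inv_mul_cancel₀ (norm_ne_zero_iff.mpr hq)]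

lemma norm_smul_qsgn (q : Quaternion ℝ) : ‖q‖ • qsgn q = q := by
  obtain rfl | hq := eq_or_ne q 0
  · simp [qsgn_zero']
  · rw [qsgn, if_neg hq, smul_smul, mul_inv_cancel₀ (norm_ne_zero_iff.mpr hq), one_smul]

lemma sq_one_aux {s : Quaternion ℝ} (hs : ‖s‖ = 1) :
    !![0, star s; s, 0] * !![0, star s; s, 0] = (1 : Matrix (Fin 2) (Fin 2) (Quaternion ℝ)) := by
  refine Matrix.ext fun i j => ?_
  fin_cases i <;> fin_cases j <;>
    simp [Matrix.mul_apply, Fin.sum_univ_two, Matrix.one_apply, Quaternion.star_mul_self,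
      Quaternion.self_mul_star, Quaternion.normSq_eq_norm_mul_self, hs]

lemma exp_smul_of_sq_eq_one (u : Matrix (Fin 2) (Fin 2) (Quaternion ℝ)) (hu : u * u = 1) (r : ℝ) :
    NormedSpace.exp (r • u) = Real.cosh r • 1 + Real.sinh r • u := by
  rw [NormedSpace.exp_eq_tsum (𝕂 := ℝ)]
  refine HasSum.tsum_eq ?_
  have h2 : ∀ k : ℕ, u ^ (2 * k) = 1 := fun k => by rw [pow_mul, sq, hu, one_pow]
  refine HasSum.even_add_odd ?_ ?_
  · have h := (Real.hasSum_cosh r).smul_const (1 : Matrix (Fin 2) (Fin 2) (Quaternion ℝ))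
    convert h using 2 with k
    · rfl
    rw [smul_pow, h2 k, smul_smul]
    congr 1; ring
  · have h := (Real.hasSum_sinh r).smul_const u
    convert h using 2 with k
    · rfl
    rw [smul_pow, pow_succ u, h2 k, one_mul, smul_smul]
    congr 1; ring

lemma exp_m (q : Quaternion ℝ) :
    NormedSpace.exp !![0, star q; q, 0] =
      Real.cosh ‖q‖ • (1 : Matrix (Fin 2) (Fin 2) (Quaternion ℝ)) +
        Real.sinh ‖q‖ • !![0, star (qsgn q); qsgn q, 0] := by
  obtain rfl | hq := eq_or_ne q 0
  · have h0 : !![0, star (0:Quaternion ℝ); 0, 0] = (0 : Matrix (Fin 2) (Fin 2) (Quaternion ℝ)) := by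
      refine Matrix.ext fun i j => ?_
      fin_cases i <;> fin_cases j <;> simp
    rw [h0, NormedSpace.exp_zero]
    simp [qsgn_zero', h0]
  · have hs := norm_qsgn hq
    have key := exp_smul_of_sq_eq_one _ (sq_one_aux hs) ‖q‖
    have harg : ‖q‖ • !![0, star (qsgn q); qsgn q, 0] = !![0, star q; q, 0] := by
      refine Matrix.ext fun i j => ?_
      fin_cases i <;> fin_cases j <;>
        simp [← Quaternion.star_smul, norm_smul_qsgn]
    rw [← harg, key]

lemma sqrt_one_sub_tanh_sq (r : ℝ) : Real.sqrt (1 - Real.tanh r ^ 2) = (Real.cosh r)⁻¹ := by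
  have hc := Real.cosh_pos r
  have h : 1 - Real.tanh r ^ 2 = ((Real.cosh r)⁻¹) ^ 2 := by
    have h1 := Real.cosh_sq_sub_sinh_sq r
    rw [Real.tanh_eq_sinh_div_cosh]
    field_simp
    exact h1
  rw [h, Real.sqrt_sq (by positivity)]

lemma part1 (q : Quaternion ℝ) :
    NormedSpace.exp !![0, star q; q, 0] =
        (Real.sqrt (1 - Real.tanh ‖q‖ ^ 2))⁻¹ •
          !![1, (Real.tanh ‖q‖ : Quaternion ℝ) * star (qsgn q);
             (Real.tanh ‖q‖ : Quaternion ℝ) * qsgn q, 1] := by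
  rw [exp_m, sqrt_one_sub_tanh_sq, inv_inv]
  have hct : Real.cosh ‖q‖ * Real.tanh ‖q‖ = Real.sinh ‖q‖ := by
    rw [Real.tanh_eq_sinh_div_cosh, mul_div_cancel₀ _ (Real.cosh_pos _).ne']
  refine Matrix.ext fun i j => ?_
  fin_cases i <;> fin_cases j <;>
    simp [Matrix.one_apply, Quaternion.coe_mul_eq_smul, smul_smul, hct]

lemma tanh_nonneg' {r : ℝ} (hr : 0 ≤ r) : 0 ≤ Real.tanh r := by
  rw [Real.tanh_eq_sinh_div_cosh]
  exact div_nonneg (Real.sinh_nonneg_iff.mpr hr) (Real.cosh_pos r).le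

lemma tanh_lt_one' (r : ℝ) : Real.tanh r < 1 := by
  rw [Real.tanh_eq_sinh_div_cosh, div_lt_one (Real.cosh_pos r)]
  nlinarith [Real.cosh_sub_sinh r, Real.exp_pos (-r)]

lemma norm_tanh_smul (q : Quaternion ℝ) :
    ‖(Real.tanh ‖q‖ : Quaternion ℝ) * qsgn q‖ = Real.tanh ‖q‖ := by
  obtain rfl | hq := eq_or_ne q 0
  · simp [qsgn_zero']
  · rw [Quaternion.coe_mul_eq_smul, norm_smul, norm_qsgn hq, mul_one, Real.norm_eq_abs,
      abs_of_nonneg (tanh_nonneg' (norm_nonneg q))]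

lemma part2_fwd (q : Quaternion ℝ) :
    ∃ a : Quaternion ℝ, ‖a‖ < 1 ∧
      NormedSpace.exp !![0, star q; q, 0] =
        (Real.sqrt (1 - ‖a‖ ^ 2))⁻¹ • !![1, star a; a, 1] := by
  refine ⟨(Real.tanh ‖q‖ : Quaternion ℝ) * qsgn q, ?_, ?_⟩
  · rw [norm_tanh_smul]; exact tanh_lt_one' _
  · rw [part1, norm_tanh_smul]
    have : star ((Real.tanh ‖q‖ : Quaternion ℝ) * qsgn q) =
        (Real.tanh ‖q‖ : Quaternion ℝ) * star (qsgn q) := by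
      rw [StarMul.star_mul, Quaternion.star_coe, Quaternion.coe_commutes]
    rw [this]

lemma tanh_surj {t : ℝ} (h0 : 0 ≤ t) (h1 : t < 1) :
    ∃ r : ℝ, 0 ≤ r ∧ Real.tanh r = t := by
  have hpos : (0:ℝ) < 1 - t ^ 2 := by nlinarith
  set r := Real.arsinh (t / Real.sqrt (1 - t ^ 2)) with hr
  have hden : (0:ℝ) < Real.sqrt (1 - t ^ 2) := Real.sqrt_pos.mpr hpos
  refine ⟨r, Real.arsinh_nonneg_iff.mpr (by positivity), ?_⟩
  have hsinh : Real.sinh r = t / Real.sqrt (1 - t ^ 2) := Real.sinh_arsinh _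
  have hcosh : Real.cosh r = 1 / Real.sqrt (1 - t ^ 2) := by
    rw [hr, Real.cosh_arsinh, div_pow, Real.sq_sqrt hpos.le]
    rw [show 1 + t ^ 2 / (1 - t ^ 2) = 1 / (1 - t ^ 2) by field_simp; ring]
    rw [one_div, one_div, Real.sqrt_inv]
  rw [Real.tanh_eq_sinh_div_cosh, hsinh, hcosh]
  field_simp

lemma part2_bwd {a : Quaternion ℝ} (ha : ‖a‖ < 1) :
    ∃ q : Quaternion ℝ,
      (Real.sqrt (1 - ‖a‖ ^ 2))⁻¹ • !![1, star a; a, 1] =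
        NormedSpace.exp !![0, star q; q, 0] := by
  obtain ⟨r, hr0, hrt⟩ := tanh_surj (norm_nonneg a) ha
  refine ⟨(r : Quaternion ℝ) * qsgn a, ?_⟩
  obtain rfl | ha0 := eq_or_ne a 0
  · have : ((r : Quaternion ℝ) * qsgn 0) = 0 := by rw [qsgn_zero', mul_zero]
    rw [this]
    have h0 : !![0, star (0:Quaternion ℝ); 0, 0] = (0 : Matrix (Fin 2) (Fin 2) (Quaternion ℝ)) := by
      refine Matrix.ext fun i j => ?_
      fin_cases i <;> fin_cases j <;> simp
    rw [h0, NormedSpace.exp_zero]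
    refine Matrix.ext fun i j => ?_
    fin_cases i <;> fin_cases j <;> simp [Matrix.one_apply]
  · set q : Quaternion ℝ := (r : Quaternion ℝ) * qsgn a with hqdef
    have hrne : r ≠ 0 := by
      rintro rfl
      rw [Real.tanh_zero] at hrt
      exact ha0 (norm_eq_zero.mp hrt.symm)
    have hsgn_ne : qsgn a ≠ 0 := by
      intro h
      have h' := norm_qsgn ha0
      rw [h, norm_zero] at h'
      norm_num at h'
    have hq0 : q ≠ 0 := by
      rw [hqdef, Quaternion.coe_mul_eq_smul]
      exact smul_ne_zero hrne hsgn_ne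
    have hnq : ‖q‖ = r := by
      rw [hqdef, Quaternion.coe_mul_eq_smul, norm_smul, norm_qsgn ha0, mul_one,
        Real.norm_eq_abs, abs_of_nonneg hr0]
    have hsgnq : qsgn q = qsgn a := by
      rw [qsgn, if_neg hq0, hnq, hqdef, Quaternion.coe_mul_eq_smul, smul_smul,
        inv_mul_cancel₀ hrne, one_smul]
    rw [part1, hnq, hsgnq, hrt]
    have h1 : (‖a‖ : Quaternion ℝ) * qsgn a = a := by
      rw [Quaternion.coe_mul_eq_smul, norm_smul_qsgn]
    have h2 : (‖a‖ : Quaternion ℝ) * star (qsgn a) = star a := by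
      conv_rhs => rw [← h1]
      rw [StarMul.star_mul, Quaternion.star_coe, Quaternion.coe_commutes]
    rw [h1, h2]

lemma part3 (q₁ q₂ : Quaternion ℝ)
    (h : NormedSpace.exp !![0, star q₁; q₁, 0] = NormedSpace.exp !![0, star q₂; q₂, 0]) :
    q₁ = q₂ := by
  rw [exp_m, exp_m] at h
  have h10 := congrFun (congrFun h 1) 0
  simp [Matrix.add_apply, Matrix.smul_apply, Matrix.one_apply] at h10
  have hn : ∀ q : Quaternion ℝ, ‖Real.sinh ‖q‖ • qsgn q‖ = Real.sinh ‖q‖ := by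
    intro q
    obtain rfl | hq := eq_or_ne q 0
    · simp [qsgn_zero']
    · rw [norm_smul, norm_qsgn hq, mul_one, Real.norm_eq_abs,
        abs_of_nonneg (Real.sinh_nonneg_iff.mpr (norm_nonneg q))]
  have hnorm : ‖q₁‖ = ‖q₂‖ := by
    have := congrArg norm h10
    rw [hn, hn] at this
    exact Real.sinh_injective this
  obtain h0 | h0 := eq_or_ne ‖q₁‖ 0
  · have e1 : q₁ = 0 := norm_eq_zero.mp h0
    have e2 : q₂ = 0 := norm_eq_zero.mp (hnorm ▸ h0)
    rw [e1, e2]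
  · have hs : Real.sinh ‖q₁‖ ≠ 0 := by
      have : 0 < ‖q₁‖ := lt_of_le_of_ne (norm_nonneg _) (Ne.symm h0)
      exact (Real.sinh_pos_iff.mpr this).ne'
    rw [← hnorm] at h10
    have hsgn : qsgn q₁ = qsgn q₂ := smul_right_injective _ hs h10
    rw [← norm_smul_qsgn q₁, ← norm_smul_qsgn q₂, hnorm, hsgn]

/-- Closed formula for `exp [[0, conj q],[q, 0]]`; consequently `exp(m_𝔹)` is exactly the
set of matrices `M(a) = (1-|a|²)^{-1/2} [[1, conj a],[a, 1]]` with `a` in the unit ball,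
and `exp` is injective on `m_𝔹`. -/
theorem stmt_15 :
    (∀ q : Quaternion ℝ,
      NormedSpace.exp !![0, star q; q, 0] =
        (Real.sqrt (1 - Real.tanh ‖q‖ ^ 2))⁻¹ •
          !![1, (Real.tanh ‖q‖ : Quaternion ℝ) * star (qsgn q);
             (Real.tanh ‖q‖ : Quaternion ℝ) * qsgn q, 1]) ∧
    (∀ A : Matrix (Fin 2) (Fin 2) (Quaternion ℝ),
      (∃ q : Quaternion ℝ, A = NormedSpace.exp !![0, star q; q, 0]) ↔
        ∃ a : Quaternion ℝ, ‖a‖ < 1 ∧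
          A = (Real.sqrt (1 - ‖a‖ ^ 2))⁻¹ • !![1, star a; a, 1]) ∧
    (∀ q₁ q₂ : Quaternion ℝ,
      NormedSpace.exp !![0, star q₁; q₁, 0] = NormedSpace.exp !![0, star q₂; q₂, 0] →
        q₁ = q₂) := by
  refine ⟨part1, fun A => ⟨?_, ?_⟩, part3⟩
  · rintro ⟨q, rfl⟩
    exact part2_fwd q
  · rintro ⟨a, ha, rfl⟩
    obtain ⟨q, hq⟩ := part2_bwd ha
    exact ⟨q, hq⟩
end

section
/- Every matrix A in Sp(1,1) can be written as A = diag(u,1)·exp(X)·(v·I_2) for some unit quaternions u, v and some X in m_B, and this decomposition is unique: if diag(u_1,1)·exp(X_1)·v_1 = diag(u_2,1)·exp(X_2)·v_2 with u_i, v_i in Sp(1) and X_i in m_B (where v_i denotes the scalar matrix v_i·I_2), then u_1 = u_2, v_1 = v_2, and X_1 = X_2. -/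
set_option maxHeartbeats 4000000

open Quaternion Matrix

noncomputable section

local notation "H" => Quaternion ℝ

lemma exp_aux (w : H) (hw : ‖w‖ = 1) (r : ℝ) :
    NormedSpace.exp !![0, (r:H) * star w; (r:H) * w, 0] =
      !![((Real.cosh r : ℝ):H), ((Real.sinh r : ℝ):H) * star w;
         ((Real.sinh r : ℝ):H) * w, ((Real.cosh r : ℝ):H)] := by
  have hws : star w * w = 1 := by
    rw [Quaternion.star_mul_self, Quaternion.normSq_eq_norm_mul_self, hw]; norm_num
  have hsw : w * star w = 1 := by
    rw [Quaternion.self_mul_star, Quaternion.normSq_eq_norm_mul_self, hw]; norm_num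
  set U : Matrix (Fin 2) (Fin 2) H := !![1, -star w; w, 1] with hU
  set M : Matrix (Fin 2) (Fin 2) H := !![1, star w; -w, 1] with hM
  have hUM : U * M = (2:ℝ) • (1 : Matrix (Fin 2) (Fin 2) H) := by
    rw [hU, hM, Matrix.mul_fin_two, Matrix.one_fin_two, Matrix.smul_of]
    refine Matrix.ext fun i j => ?_
    fin_cases i <;> fin_cases j <;> simp [hws, hsw, two_smul]
  have hMU : M * U = (2:ℝ) • (1 : Matrix (Fin 2) (Fin 2) H) := by
    rw [hU, hM, Matrix.mul_fin_two, Matrix.one_fin_two, Matrix.smul_of]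
    refine Matrix.ext fun i j => ?_
    fin_cases i <;> fin_cases j <;> simp [hws, hsw, two_smul]
  set uU : (Matrix (Fin 2) (Fin 2) H)ˣ :=
    ⟨U, (2:ℝ)⁻¹ • M, by rw [mul_smul_comm, hUM, smul_smul]; norm_num,
      by rw [smul_mul_assoc, hMU, smul_smul]; norm_num⟩ with huU
  set D : Matrix (Fin 2) (Fin 2) H := !![(r:H), 0; 0, -(r:H)] with hD
  have hr1 : ∀ s : ℝ, (s:H) = s • 1 := fun s => by
    rw [← mul_one ((s:ℝ):H), Quaternion.coe_mul_eq_smul]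
  have hX : !![0, (r:H) * star w; (r:H) * w, 0] = uU.val * D * (uU⁻¹).val := by
    show _ = U * D * ((2:ℝ)⁻¹ • M)
    rw [mul_smul_comm]
    rw [hU, hD, hM, Matrix.mul_fin_two, Matrix.mul_fin_two]
    refine Matrix.ext fun i j => ?_
    fin_cases i <;> fin_cases j <;>
      simp [Quaternion.coe_mul_eq_smul, Quaternion.mul_coe_eq_smul, mul_smul_comm,
        smul_mul_assoc, smul_smul, hws, hsw, smul_add, hr1] <;>
      module
  letI : SeminormedRing (Matrix (Fin 2) (Fin 2) H) := Matrix.linftyOpSemiNormedRing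
  letI : NormedRing (Matrix (Fin 2) (Fin 2) H) := Matrix.linftyOpNormedRing
  letI : NormedAlgebra ℝ (Matrix (Fin 2) (Fin 2) H) := Matrix.linftyOpNormedAlgebra
  letI : NormedAlgebra ℚ H := NormedAlgebra.restrictScalars ℚ ℝ H
  have hexp : NormedSpace.exp !![0, (r:H) * star w; (r:H) * w, 0]
      = uU.val * NormedSpace.exp D * (uU⁻¹).val := by
    rw [hX]
    exact Matrix.exp_units_conj uU D
  have hDdiag : D = Matrix.diagonal ![(r:H), -(r:H)] := by
    rw [hD]
    refine Matrix.ext fun i j => ?_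
    fin_cases i <;> fin_cases j <;> simp [Matrix.diagonal]
  have hexpD : NormedSpace.exp D = !![(Real.exp r : H), 0; 0, (Real.exp (-r) : H)] := by
    rw [hDdiag, Matrix.exp_diagonal, Pi.exp_def]
    refine Matrix.ext fun i j => ?_
    fin_cases i <;> fin_cases j <;>
      simp [Matrix.diagonal, ← Quaternion.coe_neg, Quaternion.exp_coe, ← Real.exp_eq_exp_ℝ]
  rw [hexp, hexpD]
  show U * _ * ((2:ℝ)⁻¹ • M) = _
  rw [mul_smul_comm, hU, hM, Matrix.mul_fin_two, Matrix.mul_fin_two, Real.cosh_eq, Real.sinh_eq]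
  refine Matrix.ext fun i j => ?_
  fin_cases i <;> fin_cases j <;>
    simp [Quaternion.coe_mul_eq_smul, Quaternion.mul_coe_eq_smul, mul_smul_comm,
      smul_mul_assoc, smul_smul, hws, hsw, smul_add, hr1] <;>
    module


lemma exp_m_s18 (q : H) :
    NormedSpace.exp !![0, star q; q, 0] =
      !![((Real.cosh ‖q‖ : ℝ):H), star q * ((Real.sinh ‖q‖ / ‖q‖ : ℝ):H);
         q * ((Real.sinh ‖q‖ / ‖q‖ : ℝ):H), ((Real.cosh ‖q‖ : ℝ):H)] := by
  rcases eq_or_ne q 0 with rfl | hq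
  · have h0 : !![(0:H), star (0:H); 0, 0] = (0 : Matrix (Fin 2) (Fin 2) H) := by
      refine Matrix.ext fun i j => ?_
      fin_cases i <;> fin_cases j <;> simp
    rw [h0, NormedSpace.exp_zero, Matrix.one_fin_two]
    refine Matrix.ext fun i j => ?_
    fin_cases i <;> fin_cases j <;> simp
  · have hr0 : ‖q‖ ≠ 0 := norm_ne_zero_iff.mpr hq
    set r : ℝ := ‖q‖ with hrdef
    set w : H := ((r⁻¹ : ℝ) : H) * q with hwdef
    have hw : ‖w‖ = 1 := by
      rw [hwdef, norm_mul, Quaternion.norm_coe, Real.norm_eq_abs,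
        abs_of_nonneg (inv_nonneg.mpr (norm_nonneg q))]
      field_simp
    have hq' : (r : H) * w = q := by
      rw [hwdef, ← mul_assoc, ← Quaternion.coe_mul, mul_inv_cancel₀ hr0, Quaternion.coe_one,
        one_mul]
    have hsq : (r : H) * star w = star q := by
      rw [hwdef, StarMul.star_mul, Quaternion.star_coe, Quaternion.coe_commutes, mul_assoc,
        ← Quaternion.coe_mul, inv_mul_cancel₀ hr0, Quaternion.coe_one, mul_one]
    have h1 : star q * ((Real.sinh r / r : ℝ) : H) = ((Real.sinh r : ℝ) : H) * star w := by
      rw [← hsq, Quaternion.mul_coe_eq_smul, Quaternion.coe_mul_eq_smul,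
        Quaternion.coe_mul_eq_smul, smul_smul]
      congr 1
      field_simp
    have h2 : q * ((Real.sinh r / r : ℝ) : H) = ((Real.sinh r : ℝ) : H) * w := by
      rw [← hq', Quaternion.mul_coe_eq_smul, Quaternion.coe_mul_eq_smul,
        Quaternion.coe_mul_eq_smul, smul_smul]
      congr 1
      field_simp
    rw [h1, h2, ← hsq, ← hq']
    exact exp_aux w hw r

lemma triple (u v q : H) :
    !![u, 0; 0, 1] * NormedSpace.exp !![0, star q; q, 0] * !![v, 0; 0, v] =
      !![u * ((Real.cosh ‖q‖ : ℝ):H) * v, u * (star q * ((Real.sinh ‖q‖ / ‖q‖ : ℝ):H)) * v;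
         q * ((Real.sinh ‖q‖ / ‖q‖ : ℝ):H) * v, ((Real.cosh ‖q‖ : ℝ):H) * v] := by
  rw [exp_m_s18, Matrix.mul_fin_two, Matrix.mul_fin_two]
  refine Matrix.ext fun i j => ?_
  fin_cases i <;> fin_cases j <;> simp [mul_assoc]

lemma normS (q : H) : ‖q * ((Real.sinh ‖q‖ / ‖q‖ : ℝ) : H)‖ = Real.sinh ‖q‖ := by
  rcases eq_or_ne q 0 with rfl | hq
  · simp
  · have h0 : (0:ℝ) < ‖q‖ := norm_pos_iff.mpr hq
    rw [norm_mul, Quaternion.norm_coe, Real.norm_eq_abs,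
      abs_of_nonneg (div_nonneg (Real.sinh_nonneg_iff.mpr (norm_nonneg q)) (norm_nonneg q))]
    field_simp

lemma normS' (q : H) : ‖q‖ * ‖((Real.sinh ‖q‖ / ‖q‖ : ℝ) : H)‖ = Real.sinh ‖q‖ := by
  rw [← norm_mul]
  exact normS q

/-- Decomposition of `Sp(1,1)` induced by regular Möbius transformations: every
`A ∈ Sp(1,1)` is uniquely `diag(u,1)·exp X·(v I₂)` with `u, v` unit quaternions and
`X = [[0, conj q],[q, 0]] ∈ m_𝔹`. -/
theorem stmt_18 (A : Matrix (Fin 2) (Fin 2) (Quaternion ℝ))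
    (hA : Aᴴ * !![1, 0; 0, -1] * A = !![1, 0; 0, -1]) :
    (∃ u v q : Quaternion ℝ, ‖u‖ = 1 ∧ ‖v‖ = 1 ∧
      A = !![u, 0; 0, 1] * NormedSpace.exp !![0, star q; q, 0] * !![v, 0; 0, v]) ∧
    (∀ u₁ v₁ q₁ u₂ v₂ q₂ : Quaternion ℝ,
      ‖u₁‖ = 1 → ‖v₁‖ = 1 → ‖u₂‖ = 1 → ‖v₂‖ = 1 →
      !![u₁, 0; 0, 1] * NormedSpace.exp !![0, star q₁; q₁, 0] * !![v₁, 0; 0, v₁] =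
        !![u₂, 0; 0, 1] * NormedSpace.exp !![0, star q₂; q₂, 0] * !![v₂, 0; 0, v₂] →
      u₁ = u₂ ∧ v₁ = v₂ ∧ q₁ = q₂) := by
  constructor
  · -- existence
    have e00 := Matrix.ext_iff.mpr hA 0 0
    have e01 := Matrix.ext_iff.mpr hA 0 1
    have e11 := Matrix.ext_iff.mpr hA 1 1
    simp [Matrix.mul_apply, Fin.sum_univ_two, Matrix.conjTranspose_apply] at e00 e01 e11
    set a := A 0 0
    set b := A 0 1
    set c := A 1 0
    set d := A 1 1
    have h00 : star a * a = 1 + star c * c := by rw [← e00]; abel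
    have h11 : star d * d = 1 + star b * b := by rw [← neg_neg (1:Quaternion ℝ), ← e11]; abel
    have h01 : star a * b = star c * d := by
      have h := e01
      rwa [add_neg_eq_zero] at h
    have hna : ‖a‖ * ‖a‖ = 1 + ‖c‖ * ‖c‖ := by
      have h := h00
      rw [Quaternion.star_mul_self, Quaternion.star_mul_self, ← Quaternion.coe_one,
        ← Quaternion.coe_add] at h
      have h' := Quaternion.coe_injective h
      rwa [Quaternion.normSq_eq_norm_mul_self, Quaternion.normSq_eq_norm_mul_self] at h'
    have hnd : ‖d‖ * ‖d‖ = 1 + ‖b‖ * ‖b‖ := by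
      have h := h11
      rw [Quaternion.star_mul_self, Quaternion.star_mul_self, ← Quaternion.coe_one,
        ← Quaternion.coe_add] at h
      have h' := Quaternion.coe_injective h
      rwa [Quaternion.normSq_eq_norm_mul_self, Quaternion.normSq_eq_norm_mul_self] at h'
    have ha0 : a ≠ 0 := by
      intro h0
      rw [h0, norm_zero] at hna
      nlinarith [norm_nonneg c]
    have hna0 : (0:ℝ) < ‖a‖ := norm_pos_iff.mpr ha0
    have hb' : b = (star a)⁻¹ * (star c * d) := by
      rw [← h01, inv_mul_cancel_left₀ (star_ne_zero.mpr ha0)]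
    have hnb : ‖b‖ = ‖c‖ * ‖d‖ / ‖a‖ := by
      rw [hb', norm_mul, norm_mul, norm_inv, Quaternion.norm_star, Quaternion.norm_star]
      ring
    have hda2 : ‖d‖ * ‖d‖ = ‖a‖ * ‖a‖ := by
      rw [hnb] at hnd
      have hne : ‖a‖ ≠ 0 := ne_of_gt hna0
      field_simp at hnd
      nlinarith [hnd, hna]
    have hdana : ‖d‖ = ‖a‖ := by
      rw [← Real.sqrt_mul_self (norm_nonneg d), ← Real.sqrt_mul_self (norm_nonneg a), hda2]
    have hnbc : ‖b‖ = ‖c‖ := by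
      rw [hnb, hdana]
      field_simp
    have hd0 : d ≠ 0 := by
      intro h0
      rw [h0, norm_zero] at hdana
      exact ne_of_gt hna0 hdana.symm
    have hnd0 : ‖d‖ ≠ 0 := norm_ne_zero_iff.mpr hd0
    set r : ℝ := Real.arsinh ‖c‖ with hrdef
    have hsinh : Real.sinh r = ‖c‖ := Real.sinh_arsinh _
    have hcosh : Real.cosh r = ‖a‖ := by
      have h3 := Real.cosh_sq r
      have hs2 : Real.sinh r ^ 2 = ‖c‖ * ‖c‖ := by rw [hsinh]; ring
      have hc2 : Real.cosh r ^ 2 = Real.cosh r * Real.cosh r := by ring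
      have h4 : Real.cosh r * Real.cosh r = ‖a‖ * ‖a‖ := by linarith
      rw [← Real.sqrt_mul_self (Real.cosh_pos r).le, ← Real.sqrt_mul_self (norm_nonneg a)]
      exact congrArg Real.sqrt h4
    set v : Quaternion ℝ := (‖a‖⁻¹ : ℝ) • d with hvdef
    set u : Quaternion ℝ := (‖a‖⁻¹ * ‖a‖⁻¹ : ℝ) • (a * star d) with hudef
    set q : Quaternion ℝ := (r / (‖c‖ * ‖a‖) : ℝ) • (c * star d) with hqdef
    have hv1 : ‖v‖ = 1 := by
      rw [hvdef, norm_smul, Real.norm_eq_abs, abs_of_nonneg (inv_nonneg.mpr (norm_nonneg a)),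
        hdana, inv_mul_cancel₀ (ne_of_gt hna0)]
    have hu1 : ‖u‖ = 1 := by
      rw [hudef, norm_smul, Real.norm_eq_abs, norm_mul, Quaternion.norm_star, hdana,
        abs_of_nonneg (by positivity)]
      field_simp
    have hq1 : ‖q‖ = r := by
      rcases eq_or_ne c 0 with hc0 | hc0
      · rw [hqdef, hc0, zero_mul, smul_zero, norm_zero, hrdef, hc0, norm_zero, Real.arsinh_zero]
      · have hnc0 : (0:ℝ) < ‖c‖ := norm_pos_iff.mpr hc0
        have hr0 : 0 ≤ r := Real.arsinh_nonneg_iff.mpr (norm_nonneg c)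
        rw [hqdef, norm_smul, Real.norm_eq_abs, norm_mul, Quaternion.norm_star, hdana,
          abs_of_nonneg (by positivity)]
        field_simp
    have hdd : ∀ x : Quaternion ℝ, star d * (d * x) = (‖d‖ * ‖d‖) • x := fun x => by
      rw [← mul_assoc, Quaternion.star_mul_self, Quaternion.coe_mul_eq_smul,
        Quaternion.normSq_eq_norm_mul_self]
    have hsdd : star d * d = ((‖d‖ * ‖d‖ : ℝ) : Quaternion ℝ) := by
      rw [Quaternion.star_mul_self, Quaternion.normSq_eq_norm_mul_self]
    have hb2 : b = (‖a‖ * ‖a‖ : ℝ)⁻¹ • (a * (star c * d)) := by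
      have h4 : a * (star a * b) = a * (star c * d) := by rw [h01]
      rw [← mul_assoc, Quaternion.self_mul_star, Quaternion.coe_mul_eq_smul,
        Quaternion.normSq_eq_norm_mul_self] at h4
      rw [← h4, smul_smul, inv_mul_cancel₀ (by positivity), one_smul]
    refine ⟨u, v, q, hu1, hv1, ?_⟩
    rw [triple u v q, hq1]
    nth_rewrite 1 [Matrix.eta_fin_two A]
    refine Matrix.ext fun i j => ?_
    fin_cases i <;> fin_cases j
    · -- entry 00 : a = u * cosh r * v
      show a = u * _ * v
      rw [hudef, hvdef]
      simp only [smul_mul_assoc, mul_smul_comm, smul_smul, Quaternion.coe_mul_eq_smul,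
        Quaternion.mul_coe_eq_smul, mul_assoc, hsdd]
      conv_lhs => rw [← one_smul ℝ a]
      congr 1
      rw [hdana, hcosh]
      field_simp
    · -- entry 01 : b = u * (star q * S) * v
      show b = u * (star q * _) * v
      rcases eq_or_ne c 0 with hc0 | hc0
      · have hb0 : b = 0 := norm_eq_zero.mp (by rw [hnbc, hc0, norm_zero])
        rw [hb0, hqdef, hc0]
        simp
      · have hnc0 : (0:ℝ) < ‖c‖ := norm_pos_iff.mpr hc0
        have hrne : r ≠ 0 := by
          intro h0
          rw [h0, Real.sinh_zero] at hsinh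
          exact hc0 (norm_eq_zero.mp hsinh.symm)
        have hstarq : star q = (r / (‖c‖ * ‖a‖) : ℝ) • (d * star c) := by
          rw [Quaternion.star_smul, StarMul.star_mul, star_star]
        rw [hb2, hudef, hvdef, hstarq]
        simp only [smul_mul_assoc, mul_smul_comm, smul_smul, Quaternion.coe_mul_eq_smul,
          Quaternion.mul_coe_eq_smul, mul_assoc, hdd]
        congr 1
        rw [hsinh, hdana]
        field_simp
    · -- entry 10 : c = q * S * v
      show c = q * _ * v
      rcases eq_or_ne c 0 with hc0 | hc0
      · rw [hqdef, hc0]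
        simp
      · have hnc0 : (0:ℝ) < ‖c‖ := norm_pos_iff.mpr hc0
        have hrne : r ≠ 0 := by
          intro h0
          rw [h0, Real.sinh_zero] at hsinh
          exact hc0 (norm_eq_zero.mp hsinh.symm)
        rw [hqdef, hvdef]
        simp only [smul_mul_assoc, mul_smul_comm, smul_smul, Quaternion.coe_mul_eq_smul,
          Quaternion.mul_coe_eq_smul, mul_assoc, hsdd]
        conv_lhs => rw [← one_smul ℝ c]
        congr 1
        rw [hdana, ← hsinh]
        field_simp
    · -- entry 11 : d = cosh r * v
      show d = _ * v
      rw [hvdef, Quaternion.coe_mul_eq_smul, smul_smul, hcosh,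
        mul_inv_cancel₀ (ne_of_gt hna0), one_smul]
  · -- uniqueness
    intro u₁ v₁ q₁ u₂ v₂ q₂ hu₁ hv₁ hu₂ hv₂ heq
    rw [triple, triple] at heq
    have g00 := Matrix.ext_iff.mpr heq 0 0
    have g10 := Matrix.ext_iff.mpr heq 1 0
    have g11 := Matrix.ext_iff.mpr heq 1 1
    simp at g00 g10 g11
    rw [← Quaternion.coe_div, ← Quaternion.coe_div] at g10
    have hv10 : v₁ ≠ 0 := by intro h; rw [h, norm_zero] at hv₁; norm_num at hv₁
    have hv20 : v₂ ≠ 0 := by intro h; rw [h, norm_zero] at hv₂; norm_num at hv₂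
    have hnq : ‖q₁‖ = ‖q₂‖ := by
      have h := congrArg norm g10
      simp only [norm_mul, hv₁, hv₂, mul_one] at h
      rw [normS', normS'] at h
      exact Real.sinh_injective h
    have hC0 : ((Real.cosh ‖q₁‖ : ℝ) : Quaternion ℝ) ≠ 0 := by
      simp only [ne_eq, ← Quaternion.coe_zero, Quaternion.coe_inj]
      exact ne_of_gt (Real.cosh_pos _)
    have hvv : v₁ = v₂ := by
      rw [← hnq] at g11
      exact mul_left_cancel₀ hC0 g11
    have hqq : q₁ = q₂ := by
      rcases eq_or_ne ‖q₁‖ 0 with h0 | h0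
      · exact (norm_eq_zero.mp h0).trans (norm_eq_zero.mp (by rw [← hnq]; exact h0)).symm
      · have hS0 : ((Real.sinh ‖q₁‖ / ‖q₁‖ : ℝ) : Quaternion ℝ) ≠ 0 := by
          simp only [ne_eq, ← Quaternion.coe_zero, Quaternion.coe_inj]
          have h1 : 0 < ‖q₁‖ := lt_of_le_of_ne (norm_nonneg _) (Ne.symm h0)
          have h2 : 0 < Real.sinh ‖q₁‖ := Real.sinh_pos_iff.mpr h1
          positivity
        rw [← hnq, ← hvv] at g10
        exact mul_right_cancel₀ hS0 (mul_right_cancel₀ hv10 g10)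
    have huu : u₁ = u₂ := by
      rw [← hnq, ← hvv] at g00
      exact mul_right_cancel₀ hC0 (mul_right_cancel₀ hv10 g00)
    exact ⟨huu, hvv, hqq⟩
end
end
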